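/- Let n ≥ 3, let c, a_2, …, a_n ≥ 0 satisfy c² ≥ a_2² + ⋯ + a_n², and let f : [0,1] → ℝ≥0 be increasing with f(√(x²+y²))^η ≥ f(x)^η + f(y)^η. Fix k ≥ 1, ω ≥ 1, 0 ≤ α ≤ η/2, and set μ = ((1+k^ω)^(α/η) - (1/2)^(α/η))/k^(ωα/η). If for each i = 2,…,n-1 one has k^ω f(a_i)^η ≤ f(√(a_{i+1}²+⋯+a_n²))^η, then f(c)^α ≥ (1/2)^(α/η)·(f(a_2)^α + μ f(a_3)^α + ⋯ + μ^{n-3} f(a_{n-1})^α) + μ^{n-2} f(a_n)^α. -/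

import Mathlib

open Real

lemma gAnti (β : ℝ) (hβ0 : 0 < β) (hβ : β ≤ 1/2) :
    AntitoneOn (fun t : ℝ => (1+t)^β - (1/2:ℝ)^β * t^β) (Set.Icc 0 1) := by
  apply antitoneOn_of_hasDerivWithinAt_nonpos (convex_Icc 0 1)
    (f' := fun t : ℝ => β * (1+t)^(β-1) - (1/2:ℝ)^β * (β * t^(β-1)))
  · apply ContinuousOn.sub
    · exact ((continuous_const.add continuous_id).rpow_const
        (fun x => Or.inr hβ0.le)).continuousOn
    · exact (continuous_const.mul (continuous_id.rpow_const
        (fun x => Or.inr hβ0.le))).continuousOn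
  · intro t ht
    rw [interior_Icc] at ht
    obtain ⟨ht0, ht1⟩ := ht
    have h1t : (0:ℝ) < 1 + t := by linarith
    have hd1 : HasDerivAt (fun t : ℝ => (1+t)^β) (1 * (β * (1+t)^(β-1))) t := by
      have : HasDerivAt (fun t : ℝ => 1 + t) 1 t := (hasDerivAt_id t).const_add 1
      simpa using this.rpow_const (Or.inl h1t.ne')
    have hd2 : HasDerivAt (fun t : ℝ => (1/2:ℝ)^β * t^β) ((1/2:ℝ)^β * (β * t^(β-1))) t := by
      exact ((Real.hasDerivAt_rpow_const (Or.inl ht0.ne')).const_mul _)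
    have := (hd1.sub hd2)
    simp only [one_mul] at this
    exact this.hasDerivWithinAt
  · intro t ht
    rw [interior_Icc] at ht
    obtain ⟨ht0, ht1⟩ := ht
    have h1t : (0:ℝ) < 1 + t := by linarith
    rw [sub_nonpos]
    have hmain : (1+t)^(β-1) ≤ (1/2:ℝ)^β * t^(β-1) := by
      have key : t^(1-β) ≤ (1/2:ℝ)^β * (1+t)^(1-β) := by
        have h1 : t^(1-β) ≤ ((1+t)/2)^(1-β) :=
          Real.rpow_le_rpow ht0.le (by linarith) (by linarith)
        have h2 : ((1+t)/2)^(1-β) = (1/2:ℝ)^(1-β) * (1+t)^(1-β) := by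
          rw [← Real.mul_rpow (by norm_num) h1t.le]; ring_nf
        have h3 : (1/2:ℝ)^(1-β) ≤ (1/2:ℝ)^β :=
          Real.rpow_le_rpow_of_exponent_ge (by norm_num) (by norm_num) (by linarith)
        calc t^(1-β) ≤ (1/2:ℝ)^(1-β) * (1+t)^(1-β) := by rw [← h2]; exact h1
          _ ≤ (1/2:ℝ)^β * (1+t)^(1-β) :=
            mul_le_mul_of_nonneg_right h3 (Real.rpow_nonneg h1t.le _)
      have hA : (0:ℝ) < (1+t)^(1-β) := Real.rpow_pos_of_pos h1t _
      have hB : (0:ℝ) < t^(1-β) := Real.rpow_pos_of_pos ht0 _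
      have e1 : (1+t)^(β-1) = ((1+t)^(1-β))⁻¹ := by
        rw [show β-1 = -(1-β) by ring, Real.rpow_neg h1t.le]
      have e2 : t^(β-1) = (t^(1-β))⁻¹ := by
        rw [show β-1 = -(1-β) by ring, Real.rpow_neg ht0.le]
      rw [e1, e2]
      rw [inv_eq_one_div, show (1/2:ℝ)^β * (t^(1-β))⁻¹ = (1/2:ℝ)^β / t^(1-β) by
        rw [inv_eq_one_div]; ring, div_le_div_iff₀ hA hB]
      nlinarith [key, Real.rpow_nonneg ht0.le (1-β)]
    calc β * (1+t)^(β-1) ≤ β * ((1/2:ℝ)^β * t^(β-1)) :=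
        mul_le_mul_of_nonneg_left hmain hβ0.le
      _ = (1/2:ℝ)^β * (β * t^(β-1)) := by ring

lemma keyIneq (β K : ℝ) (hβ0 : 0 ≤ β) (hβ : β ≤ 1/2) (hK : 1 ≤ K)
    (x y : ℝ) (hx : 0 ≤ x) (hy : 0 ≤ y) (hxy : K * x ≤ y) :
    (1/2:ℝ)^β * x^β + ((1+K)^β - (1/2:ℝ)^β)/K^β * y^β ≤ (x+y)^β := by
  have hK0 : (0:ℝ) < K := lt_of_lt_of_le one_pos hK
  rcases hβ0.eq_or_lt with hβz | hβp
  · simp [← hβz, Real.rpow_zero]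
  rcases hy.eq_or_lt with hyz | hyp
  · have hx0 : x = 0 := by nlinarith
    rw [hx0, ← hyz]
    simp [Real.zero_rpow hβp.ne']
  -- y > 0
  have hKβ : (0:ℝ) < K^β := Real.rpow_pos_of_pos hK0 _
  set t := x / y with htdef
  have ht0 : 0 ≤ t := div_nonneg hx hy
  have htK : t ≤ 1/K := by
    rw [htdef, div_le_div_iff₀ hyp hK0]
    calc x * K = K * x := by ring
      _ ≤ y := hxy
      _ = 1 * y := by ring
  have ht1 : t ≤ 1 := htK.trans (by rw [div_le_one hK0]; exact hK)
  have hx_eq : x = t * y := by rw [htdef, div_mul_cancel₀ x hyp.ne']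
  have hcore : (1/2:ℝ)^β * t^β + ((1+K)^β - (1/2:ℝ)^β)/K^β ≤ (1+t)^β := by
    have hmem1 : t ∈ Set.Icc (0:ℝ) 1 := ⟨ht0, ht1⟩
    have hmem2 : (1/K) ∈ Set.Icc (0:ℝ) 1 := ⟨by positivity, by rw [div_le_one hK0]; exact hK⟩
    have hanti := gAnti β hβp hβ hmem1 hmem2 htK
    simp only at hanti
    -- hanti : (1+1/K)^β - (1/2)^β*(1/K)^β ≤ (1+t)^β - (1/2)^β * t^β
    have heq : (1+1/K)^β - (1/2:ℝ)^β * (1/K)^β = ((1+K)^β - (1/2:ℝ)^β)/K^β := by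
      have e1 : (1+1/K : ℝ) = (1+K)/K := by field_simp; ring
      rw [e1, Real.div_rpow (by linarith) hK0.le, Real.div_rpow (by norm_num) hK0.le,
        Real.one_rpow]
      field_simp
    linarith [heq ▸ hanti]
  have hyβ : (0:ℝ) < y^β := Real.rpow_pos_of_pos hyp _
  have e1 : (x+y)^β = (1+t)^β * y^β := by
    rw [hx_eq, show t*y + y = (1+t)*y by ring, Real.mul_rpow (by linarith) hy]
  have e2 : x^β = t^β * y^β := by
    rw [hx_eq, Real.mul_rpow ht0 hy]
  rw [e1, e2]
  calc (1/2:ℝ)^β * (t^β * y^β) + ((1+K)^β - (1/2:ℝ)^β)/K^β * y^β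
      = ((1/2:ℝ)^β * t^β + ((1+K)^β - (1/2:ℝ)^β)/K^β) * y^β := by ring
    _ ≤ (1+t)^β * y^β := mul_le_mul_of_nonneg_right hcore hyβ.le

open Real Finset

theorem stmt_15 (n : ℕ) (hn : 3 ≤ n) (c : ℝ) (a : ℕ → ℝ)
    (hc0 : 0 ≤ c) (hc1 : c ≤ 1)
    (ha0 : ∀ i, 0 ≤ a i) (ha1 : ∀ i, a i ≤ 1)
    (hckw : c ^ 2 ≥ ∑ i ∈ Finset.Icc 2 n, a i ^ 2)
    (f : ℝ → ℝ) (η k ω α : ℝ)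
    (hf_nonneg : ∀ z ∈ Set.Icc (0 : ℝ) 1, 0 ≤ f z)
    (hf_mono : MonotoneOn f (Set.Icc (0 : ℝ) 1))
    (hη : 1 ≤ η)
    (hf_super : ∀ u v : ℝ, 0 ≤ u → 0 ≤ v → u ^ 2 + v ^ 2 ≤ 1 →
      f (Real.sqrt (u ^ 2 + v ^ 2)) ^ η ≥ f u ^ η + f v ^ η)
    (hk : 1 ≤ k) (hω : 1 ≤ ω) (hα0 : 0 ≤ α) (hα : α ≤ η / 2)
    (hcond : ∀ i, 2 ≤ i → i ≤ n - 1 →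
      k ^ ω * f (a i) ^ η ≤ f (Real.sqrt (∑ j ∈ Finset.Icc (i + 1) n, a j ^ 2)) ^ η) :
    f c ^ α ≥
      (1 / 2 : ℝ) ^ (α / η) *
          (∑ i ∈ Finset.Icc 2 (n - 1),
            (((1 + k ^ ω) ^ (α / η) - (1 / 2 : ℝ) ^ (α / η)) / k ^ (ω * α / η)) ^ (i - 2) *
              f (a i) ^ α) +
        (((1 + k ^ ω) ^ (α / η) - (1 / 2 : ℝ) ^ (α / η)) / k ^ (ω * α / η)) ^ (n - 2) *
          f (a n) ^ α := by
  have hη0 : (0:ℝ) < η := lt_of_lt_of_le one_pos hη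
  have hk0 : (0:ℝ) ≤ k := le_trans zero_le_one hk
  have hK : (1:ℝ) ≤ k ^ ω := Real.one_le_rpow hk (le_trans zero_le_one hω)
  have hK0 : (0:ℝ) < k ^ ω := lt_of_lt_of_le one_pos hK
  have hβ0 : 0 ≤ α / η := div_nonneg hα0 hη0.le
  have hβ : α / η ≤ 1 / 2 := by
    rw [div_le_div_iff₀ hη0 (by norm_num)]
    linarith
  -- rewrite the μ denominator
  have hden : k ^ (ω * α / η) = (k ^ ω) ^ (α / η) := by
    rw [mul_div_assoc, Real.rpow_mul hk0]
  set μ : ℝ := ((1 + k ^ ω) ^ (α / η) - (1 / 2 : ℝ) ^ (α / η)) / k ^ (ω * α / η) with hμdef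
  have hμ0 : 0 ≤ μ := by
    apply div_nonneg
    · rw [sub_nonneg]
      exact Real.rpow_le_rpow (by norm_num) (by linarith) hβ0
    · rw [hden]; positivity
  have hμden : μ = ((1 + k ^ ω) ^ (α / η) - (1 / 2 : ℝ) ^ (α / η)) / (k ^ ω) ^ (α / η) := by
    rw [hμdef, hden]
  -- tail sums
  set S : ℕ → ℝ := fun i => ∑ j ∈ Finset.Icc i n, a j ^ 2 with hSdef
  have hS0 : ∀ i, 0 ≤ S i := fun i => Finset.sum_nonneg fun j _ => sq_nonneg _
  have hS1 : ∀ i, 2 ≤ i → S i ≤ 1 := by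
    intro i hi
    have h1 : S i ≤ S 2 :=
      Finset.sum_le_sum_of_subset_of_nonneg (Finset.Icc_subset_Icc_left hi)
        (fun j _ _ => sq_nonneg _)
    have h2 : c ^ 2 ≤ 1 := by nlinarith
    have := hckw
    simp only [ge_iff_le, ← hSdef] at this
    linarith
  have hsqrt_mem : ∀ i, 2 ≤ i → Real.sqrt (S i) ∈ Set.Icc (0:ℝ) 1 := by
    intro i hi
    exact ⟨Real.sqrt_nonneg _, Real.sqrt_le_one.2 (hS1 i hi)⟩
  have hamem : ∀ i, a i ∈ Set.Icc (0:ℝ) 1 := fun i => ⟨ha0 i, ha1 i⟩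
  -- (z^η)^(α/η) = z^α
  have hpow : ∀ z : ℝ, 0 ≤ z → (z ^ η) ^ (α / η) = z ^ α := by
    intro z hz
    rw [← Real.rpow_mul hz]
    congr 1
    field_simp
  set F : ℕ → ℝ := fun i => f (Real.sqrt (S i)) ^ α with hFdef
  -- splitting the tail sum
  have hsplit : ∀ i, i < n → S i = a i ^ 2 + S (i + 1) := by
    intro i hi
    simp only [hSdef]
    rw [Finset.Icc_eq_cons_Ioc (le_of_lt hi), Finset.sum_cons, ← Finset.Icc_add_one_left_eq_Ioc]
  -- the one-step inequality
  have step : ∀ i, 2 ≤ i → i ≤ n - 1 →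
      (1/2:ℝ) ^ (α/η) * f (a i) ^ α + μ * F (i + 1) ≤ F i := by
    intro i h2 h3
    have hin : i < n := by omega
    have hv0 : 0 ≤ Real.sqrt (S (i+1)) := Real.sqrt_nonneg _
    have hv2 : Real.sqrt (S (i+1)) ^ 2 = S (i+1) := Real.sq_sqrt (hS0 _)
    have hsum1 : a i ^ 2 + Real.sqrt (S (i+1)) ^ 2 ≤ 1 := by
      rw [hv2, ← hsplit i hin]; exact hS1 i h2
    have hsup := hf_super (a i) (Real.sqrt (S (i+1))) (ha0 i) hv0 hsum1
    rw [hv2, ← hsplit i hin] at hsup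
    have hcnd := hcond i h2 h3
    have hfa0 : 0 ≤ f (a i) := hf_nonneg _ (hamem i)
    have hfv0 : 0 ≤ f (Real.sqrt (S (i+1))) := hf_nonneg _ (hsqrt_mem (i+1) (by omega))
    have hfS0 : 0 ≤ f (Real.sqrt (S i)) := hf_nonneg _ (hsqrt_mem i h2)
    have key := keyIneq (α/η) (k^ω) hβ0 hβ hK (f (a i) ^ η) (f (Real.sqrt (S (i+1))) ^ η)
      (Real.rpow_nonneg hfa0 _) (Real.rpow_nonneg hfv0 _) hcnd
    have hmono : (f (a i) ^ η + f (Real.sqrt (S (i+1))) ^ η) ^ (α/η)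
        ≤ (f (Real.sqrt (S i)) ^ η) ^ (α/η) :=
      Real.rpow_le_rpow (by positivity) hsup hβ0
    rw [hpow _ hfa0, hpow _ hfv0] at key
    rw [hpow _ hfS0] at hmono
    calc (1/2:ℝ) ^ (α/η) * f (a i) ^ α + μ * F (i+1)
        = (1/2:ℝ) ^ (α/η) * f (a i) ^ α
          + ((1 + k^ω) ^ (α/η) - (1/2:ℝ)^(α/η)) / (k^ω)^(α/η) * f (Real.sqrt (S (i+1))) ^ α := by
          rw [hμden]
      _ ≤ (f (a i) ^ η + f (Real.sqrt (S (i+1))) ^ η) ^ (α/η) := key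
      _ ≤ F i := hmono
  -- induction claim
  have claim : ∀ d : ℕ, ∀ i : ℕ, 2 ≤ i → i ≤ n - 1 → n - 1 - i ≤ d →
      (1/2:ℝ) ^ (α/η) * (∑ j ∈ Finset.Icc i (n-1), μ ^ (j - i) * f (a j) ^ α)
        + μ ^ (n - i) * f (a n) ^ α ≤ F i := by
    intro d
    induction d with
    | zero =>
      intro i h2 h3 h4
      have hieq : i = n - 1 := by omega
      subst hieq
      have hstep := step (n-1) h2 h3
      have hSn : S n = a n ^ 2 := by
        simp [hSdef, Finset.Icc_self]
      have hFn : F n = f (a n) ^ α := by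
        simp only [hFdef, hSn, Real.sqrt_sq (ha0 n)]
      have hn1 : n - 1 + 1 = n := by omega
      rw [hn1] at hstep
      rw [hFn] at hstep
      have hIcc : Finset.Icc (n-1) (n-1) = {n-1} := Finset.Icc_self _
      rw [hIcc, Finset.sum_singleton, Nat.sub_self, pow_zero, one_mul,
        show n - (n-1) = 1 by omega, pow_one]
      linarith
    | succ d ih =>
      intro i h2 h3 h4
      by_cases hieq : i = n - 1
      · subst hieq
        have hstep := step (n-1) h2 h3
        have hSn : S n = a n ^ 2 := by simp [hSdef, Finset.Icc_self]
        have hFn : F n = f (a n) ^ α := by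
          simp only [hFdef, hSn, Real.sqrt_sq (ha0 n)]
        have hn1 : n - 1 + 1 = n := by omega
        rw [hn1, hFn] at hstep
        rw [Finset.Icc_self, Finset.sum_singleton, Nat.sub_self, pow_zero, one_mul,
          show n - (n-1) = 1 by omega, pow_one]
        linarith
      · have hlt : i < n - 1 := by omega
        have hih := ih (i+1) (by omega) (by omega) (by omega)
        have hstep := step i h2 h3
        have hF1 : μ * ((1/2:ℝ) ^ (α/η) * (∑ j ∈ Finset.Icc (i+1) (n-1), μ ^ (j - (i+1)) * f (a j) ^ α)
            + μ ^ (n - (i+1)) * f (a n) ^ α) ≤ μ * F (i+1) :=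
          mul_le_mul_of_nonneg_left hih hμ0
        -- identity for the sums
        have hid : (1/2:ℝ) ^ (α/η) * (∑ j ∈ Finset.Icc i (n-1), μ ^ (j - i) * f (a j) ^ α)
              + μ ^ (n - i) * f (a n) ^ α
            = (1/2:ℝ) ^ (α/η) * f (a i) ^ α
              + μ * ((1/2:ℝ) ^ (α/η) * (∑ j ∈ Finset.Icc (i+1) (n-1), μ ^ (j - (i+1)) * f (a j) ^ α)
                + μ ^ (n - (i+1)) * f (a n) ^ α) := by
          have hsum : ∑ j ∈ Finset.Icc i (n-1), μ ^ (j - i) * f (a j) ^ α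
              = f (a i) ^ α + μ * ∑ j ∈ Finset.Icc (i+1) (n-1), μ ^ (j - (i+1)) * f (a j) ^ α := by
            rw [Finset.Icc_eq_cons_Ioc (by omega : i ≤ n - 1), Finset.sum_cons,
              ← Finset.Icc_add_one_left_eq_Ioc, Nat.sub_self, pow_zero, one_mul, Finset.mul_sum]
            congr 1
            apply Finset.sum_congr rfl
            intro j hj
            rw [Finset.mem_Icc] at hj
            rw [show j - i = (j - (i+1)) + 1 by omega, pow_succ]
            ring
          have hpown : μ ^ (n - i) = μ * μ ^ (n - (i+1)) := by
            rw [show n - i = (n - (i+1)) + 1 by omega, pow_succ]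
            ring
          rw [hsum, hpown]
          ring
        rw [hid]
        calc (1/2:ℝ) ^ (α/η) * f (a i) ^ α
              + μ * ((1/2:ℝ) ^ (α/η) * (∑ j ∈ Finset.Icc (i+1) (n-1), μ ^ (j - (i+1)) * f (a j) ^ α)
                + μ ^ (n - (i+1)) * f (a n) ^ α)
            ≤ (1/2:ℝ) ^ (α/η) * f (a i) ^ α + μ * F (i+1) := by linarith
          _ ≤ F i := hstep
  -- conclude
  have hclaim := claim n 2 (le_refl 2) (by omega) (by omega)
  have hfinal : F 2 ≤ f c ^ α := by
    have hle : Real.sqrt (S 2) ≤ c := by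
      have h1 : Real.sqrt (S 2) ≤ Real.sqrt (c^2) := Real.sqrt_le_sqrt hckw
      rwa [Real.sqrt_sq hc0] at h1
    have hfle : f (Real.sqrt (S 2)) ≤ f c :=
      hf_mono (hsqrt_mem 2 (le_refl 2)) ⟨hc0, hc1⟩ hle
    exact Real.rpow_le_rpow (hf_nonneg _ (hsqrt_mem 2 (le_refl 2))) hfle hα0
  simp only [ge_iff_le, ← hμdef]
  calc (1/2:ℝ) ^ (α/η) * (∑ i ∈ Finset.Icc 2 (n-1), μ ^ (i - 2) * f (a i) ^ α)
        + μ ^ (n - 2) * f (a n) ^ α ≤ F 2 := hclaim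
    _ ≤ f c ^ α := hfinal
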